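/- arXiv:2007.04757 — 2 statements merged into one kernel-verified Lean document; each statement's English description precedes it below -/
import Mathlib

section
/- Let q_0 = 1 < q_1 < ... < q_g be positive integers with q_i | q_{i+1} for all i, and suppose g ≥ 1. Then for any index 1 ≤ j ≤ g, we have q_g - q_j + q_{j-1} ≥ q_{g-1}, with strict inequality whenever j < g. -/
/-- For a divisibility chain `q 0 = 1 < q 1 < ... < q g` with `g ≥ 1` and any
`1 ≤ j ≤ g`, we have `q g - q j + q (j-1) ≥ q (g-1)`, strict whenever `j < g`. -/
theorem stmt1 (g : ℕ) (q : ℕ → ℕ) (hg : 1 ≤ g) (h0 : q 0 = 1)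
    (hlt : ∀ i < g, q i < q (i + 1)) (hdvd : ∀ i < g, q i ∣ q (i + 1))
    (j : ℕ) (hj1 : 1 ≤ j) (hjg : j ≤ g) :
    q (g - 1) ≤ q g - q j + q (j - 1) ∧ (j < g → q (g - 1) < q g - q j + q (j - 1)) := by
  have mono' : ∀ a b, a ≤ b → b ≤ g → q a ≤ q b := by
    intro a b hab hbg
    induction hab with
    | refl => exact le_rfl
    | @step m hm ih =>
      exact le_trans (ih (le_trans (Nat.le_succ m) hbg))
        (le_of_lt (hlt m (Nat.lt_of_succ_le hbg)))
  have hpos : ∀ i, i ≤ g → 1 ≤ q i := fun i hi => h0 ▸ mono' 0 i (Nat.zero_le i) hi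
  rcases Nat.lt_or_ge j g with hjlt | hjeq
  · -- j < g : strict inequality
    have hjg1 : j ≤ g - 1 := by omega
    have hqj : q j ≤ q (g - 1) := mono' j (g - 1) hjg1 (Nat.sub_le g 1)
    have hdg : q (g - 1) ∣ q g := by
      have := hdvd (g - 1) (by omega)
      have hgg : g - 1 + 1 = g := by omega
      rwa [hgg] at this
    have hltg : q (g - 1) < q g := by
      have := hlt (g - 1) (by omega)
      have hgg : g - 1 + 1 = g := by omega
      rwa [hgg] at this
    have h2 : 2 * q (g - 1) ≤ q g := by
      rcases hdg with ⟨c, hc⟩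
      have hc2 : 2 ≤ c := by
        by_contra h
        interval_cases c <;> omega
      calc 2 * q (g - 1) ≤ c * q (g - 1) :=
            Nat.mul_le_mul_right _ hc2
        _ = q g := by rw [hc, Nat.mul_comm]
    have hj1pos : 1 ≤ q (j - 1) := hpos (j - 1) (by omega)
    constructor
    · omega
    · intro _; omega
  · -- j = g
    have hje : j = g := le_antisymm hjg hjeq
    subst hje
    constructor
    · have : q j ≤ q j := le_rfl
      omega
    · intro h; omega
end

section
/- The curve γ(t) = (t^4, t^6·u(t)), where u is a formal power series with u(t)² = 1 + t and u(0) = 1, is invariant under the vector field X = 8xy·∂/∂x + (13y² − x³)·∂/∂y: the pullback along γ satisfies the proportionality X(γ(t))·(dγ/dt components cross product) = 0, i.e. 8·x(t)·y(t)·y'(t) − (13·y(t)² − x(t)³)·x'(t) = 0. -/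
open PowerSeries
open scoped PowerSeries

/-- With `x(t) = t^4` and `y(t) = t^6·u(t)` where `u² = 1 + t`, `u(0) = 1`
(as formal power series), the curve is invariant under `X = 8xy·∂/∂x + (13y² - x³)·∂/∂y`:
`8·x·y·y' - (13y² - x³)·x' = 0`. -/
theorem stmt10 (u : ℂ⟦X⟧) (hu : u ^ 2 = 1 + PowerSeries.X)
    (hu0 : PowerSeries.constantCoeff u = 1) :
    8 * (PowerSeries.X ^ 4 : ℂ⟦X⟧) * (PowerSeries.X ^ 6 * u) *
        (d⁄dX ℂ) (PowerSeries.X ^ 6 * u) -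
      (13 * (PowerSeries.X ^ 6 * u) ^ 2 - (PowerSeries.X ^ 4 : ℂ⟦X⟧) ^ 3) *
        (d⁄dX ℂ) (PowerSeries.X ^ 4 : ℂ⟦X⟧) = 0 := by
  have h1 : (d⁄dX ℂ) (u ^ 2) = (d⁄dX ℂ) (1 + PowerSeries.X) := by rw [hu]
  rw [pow_two, Derivation.leibniz, map_add, Derivation.map_one_eq_zero,
    PowerSeries.derivative_X] at h1
  simp only [smul_eq_mul, zero_add] at h1
  have h2 : 2 * u * (d⁄dX ℂ) u = 1 := by linear_combination h1
  simp only [Derivation.leibniz, Derivation.leibniz_pow, PowerSeries.derivative_X,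
    smul_eq_mul, mul_one]
  linear_combination (-4 * (X:ℂ⟦X⟧) ^ 15) * hu + (4 * (X:ℂ⟦X⟧) ^ 16) * h2
end
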